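/- Fix integers r ≥ 3 and d ≥ 2. The toric ideal I_{G_{r,d}} ⊆ k[a_1,…,a_d,b_1,…,b_d,e_1,…,e_{2r−2}] is equal to the ideal generated by the set {a_i b_j − b_i a_j : 1 ≤ i < j ≤ d} ∪ {a_i e_2 e_4 ⋯ e_{2r−2} − b_i e_1 e_3 e_5 ⋯ e_{2r−3} : 1 ≤ i ≤ d}. -/

import Mathlib

open MvPolynomial

/-- The vertices of the graph `G_{r,d}`: `x₁, x₂`, the `y`-vertices `y_1, …, y_d`
(`Vert.y i` is `y_{i+1}`), and the path vertices `z_1, …, z_{2r-3}`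
(`Vert.z j` is `z_{j+1}`). -/
inductive Vert (d r : ℕ) : Type where
  | x1 : Vert d r
  | x2 : Vert d r
  | y : Fin d → Vert d r
  | z : Fin (2 * r - 3) → Vert d r
deriving DecidableEq

/-- The edge variables of `G_{r,d}`: `a_1, …, a_d`, `b_1, …, b_d` and
`e_1, …, e_{2r-2}` (0-indexed: `EVar.a i` is `a_{i+1}`, etc.). -/
inductive EVar (d r : ℕ) : Type where
  | a : Fin d → EVar d r
  | b : Fin d → EVar d r
  | e : Fin (2 * r - 2) → EVar d r
deriving DecidableEq

/-- The image of each edge variable of `G_{r,d}` under `φ_G`: the product of the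
variables of the two endpoints of the corresponding edge.  Here
`a_i = {x₁, y_i}`, `b_i = {x₂, y_i}`, `e_1 = {x₁, z_1}`,
`e_j = {z_{j-1}, z_j}` for `2 ≤ j ≤ 2r-3` and `e_{2r-2} = {z_{2r-3}, x₂}`. -/
noncomputable def edgeImage (k : Type) [Field k] (d r : ℕ) :
    EVar d r → MvPolynomial (Vert d r) k
  | .a i => X Vert.x1 * X (Vert.y i)
  | .b i => X Vert.x2 * X (Vert.y i)
  | .e t =>
      (if h : t.val = 0 then X Vert.x1
        else X (Vert.z ⟨t.val - 1, by have := t.isLt; omega⟩)) *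
      (if h : t.val = 2 * r - 3 then X Vert.x2
        else X (Vert.z ⟨t.val, by have := t.isLt; omega⟩))

/-- The toric ideal `I_{G_{r,d}}` of the graph `G_{r,d}`, viewed in the polynomial
ring `k[a_1,…,a_d,b_1,…,b_d,e_1,…,e_{2r-2}]`: the kernel of the `k`-algebra map
`φ : k[a_1,…,e_{2r-2}] → k[x₁,x₂,y_1,…,y_d,z_1,…,z_{2r-3}]` sending each edge
variable to the product of its endpoint variables. -/
noncomputable def toricIdealGrd (k : Type) [Field k] (d r : ℕ) :
    Ideal (MvPolynomial (EVar d r) k) :=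
  RingHom.ker (MvPolynomial.aeval (edgeImage k d r)).toRingHom

/-- The monomial `e_2 e_4 ⋯ e_{2r-2}` (product of the even-indexed `e`-variables;
in the 0-indexed encoding these are the `EVar.e t` with `t.val` odd). -/
noncomputable def evenEProd (k : Type) [Field k] (d r : ℕ) : MvPolynomial (EVar d r) k :=
  ∏ t ∈ Finset.univ.filter (fun t : Fin (2 * r - 2) => t.val % 2 = 1), X (EVar.e t)

/-- The monomial `e_1 e_3 ⋯ e_{2r-3}` (product of the odd-indexed `e`-variables;
in the 0-indexed encoding these are the `EVar.e t` with `t.val` even). -/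
noncomputable def oddEProd (k : Type) [Field k] (d r : ℕ) : MvPolynomial (EVar d r) k :=
  ∏ t ∈ Finset.univ.filter (fun t : Fin (2 * r - 2) => t.val % 2 = 0), X (EVar.e t)


section Aux

variable {d r : ℕ}

/-- Exponent vector of the image of an edge variable. -/
noncomputable def Wf (d r : ℕ) : EVar d r → (Vert d r →₀ ℕ)
  | .a i => Finsupp.single Vert.x1 1 + Finsupp.single (Vert.y i) 1
  | .b i => Finsupp.single Vert.x2 1 + Finsupp.single (Vert.y i) 1
  | .e t =>
      Finsupp.single (if h : t.val = 0 then Vert.x1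
        else Vert.z ⟨t.val - 1, by have := t.isLt; omega⟩) 1 +
      Finsupp.single (if h : t.val = 2 * r - 3 then Vert.x2
        else Vert.z ⟨t.val, by have := t.isLt; omega⟩) 1

lemma edgeImage_eq_monomial (k : Type) [Field k] (d r : ℕ) (u : EVar d r) :
    edgeImage k d r u = monomial (Wf d r u) 1 := by
  have hx : ∀ v w : Vert d r, (X v * X w : MvPolynomial (Vert d r) k)
      = monomial (Finsupp.single v 1 + Finsupp.single w 1) 1 := by
    intro v w
    rw [X, X, monomial_mul, one_mul]
  cases u with
  | a i => exact hx _ _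
  | b i => exact hx _ _
  | e t =>
    unfold edgeImage Wf
    dsimp only
    split_ifs <;> exact hx _ _

/-- The exponent-level monomial map. -/
noncomputable def Phi (d r : ℕ) : (EVar d r →₀ ℕ) →ₗ[ℕ] (Vert d r →₀ ℕ) :=
  Finsupp.linearCombination ℕ (Wf d r)

lemma aeval_monomial_eq (k : Type) [Field k] (d r : ℕ) (m : EVar d r →₀ ℕ) (c : k) :
    aeval (edgeImage k d r) (monomial m c) = monomial (Phi d r m) c := by
  rw [aeval_monomial, Phi, Finsupp.linearCombination_apply]
  have : (m.prod fun u n => edgeImage k d r u ^ n)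
      = monomial (m.sum fun u n => n • Wf d r u) 1 := by
    induction m using Finsupp.induction with
    | zero => simp [Finsupp.prod_zero_index, Finsupp.sum_zero_index]
    | single_add u n f hu hn ih =>
      rw [Finsupp.prod_add_index (by intros; simp) (by intros; simp [pow_add]),
          Finsupp.sum_add_index (by intros; simp) (by intros; simp [add_smul]),
          Finsupp.prod_single_index (by simp), Finsupp.sum_single_index (by simp),
          ih, edgeImage_eq_monomial, monomial_pow, monomial_mul, one_pow, one_mul]
  rw [this, algebraMap_eq, C_mul_monomial, mul_one]

/-- Equivalence for finiteness of `EVar`. -/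
def evarEquiv (d r : ℕ) : EVar d r ≃ (Fin d ⊕ Fin d ⊕ Fin (2 * r - 2)) where
  toFun u := match u with
    | .a i => .inl i
    | .b i => .inr (.inl i)
    | .e t => .inr (.inr t)
  invFun x := match x with
    | .inl i => .a i
    | .inr (.inl i) => .b i
    | .inr (.inr t) => .e t
  left_inv := by rintro (i | i | t) <;> rfl
  right_inv := by rintro (i | i | t) <;> rfl

noncomputable instance : Fintype (EVar d r) := Fintype.ofEquiv _ (evarEquiv d r).symm

lemma evar_sum {M : Type*} [AddCommMonoid M] (f : EVar d r → M) :
    ∑ u : EVar d r, f u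
      = (∑ i, f (.a i)) + (∑ i, f (.b i)) + (∑ t, f (.e t)) := by
  rw [← (evarEquiv d r).symm.sum_comp f]
  rw [Fintype.sum_sum_type]
  simp only [Fintype.sum_sum_type]
  rw [add_assoc]
  rfl

end Aux

section Aux2

variable {d r : ℕ}

lemma Phi_apply (m : EVar d r →₀ ℕ) (v : Vert d r) :
    Phi d r m v = ∑ u : EVar d r, m u * (Wf d r u) v := by
  rw [Phi, Finsupp.linearCombination_apply, Finsupp.sum_apply,
    Finsupp.sum_fintype _ _ (by intro u; simp)]
  simp [Finsupp.smul_apply]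

/-- Total degree in the `a`-variables. -/
def Adeg (m : EVar d r →₀ ℕ) : ℕ := ∑ i, m (.a i)

/-- Total degree in the `b`-variables. -/
def Bdeg (m : EVar d r →₀ ℕ) : ℕ := ∑ i, m (.b i)

lemma Wf_e_x1 (t : Fin (2 * r - 2)) :
    Wf d r (.e t) Vert.x1 = if t.val = 0 then 1 else 0 := by
  unfold Wf
  rw [Finsupp.add_apply, Finsupp.single_apply, Finsupp.single_apply]
  split_ifs <;> simp_all

lemma Wf_e_x2 (t : Fin (2 * r - 2)) :
    Wf d r (.e t) Vert.x2 = if t.val = 2 * r - 3 then 1 else 0 := by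
  unfold Wf
  rw [Finsupp.add_apply, Finsupp.single_apply, Finsupp.single_apply]
  split_ifs <;> simp_all

lemma Wf_e_y (t : Fin (2 * r - 2)) (i : Fin d) :
    Wf d r (.e t) (Vert.y i) = 0 := by
  unfold Wf
  rw [Finsupp.add_apply, Finsupp.single_apply, Finsupp.single_apply]
  split_ifs <;> simp_all

lemma Wf_e_z (t : Fin (2 * r - 2)) (s : Fin (2 * r - 3)) :
    Wf d r (.e t) (Vert.z s)
      = (if t.val = s.val + 1 then 1 else 0) + (if t.val = s.val then 1 else 0) := by
  have hs := s.isLt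
  unfold Wf
  rw [Finsupp.add_apply, Finsupp.single_apply, Finsupp.single_apply]
  split_ifs with h1 h2 h3 h4 h5 h6 h7 h8 <;>
    simp_all [Vert.z.injEq, Fin.ext_iff] <;> omega

lemma Phi_x1 (m : EVar d r →₀ ℕ) (h0 : (0:ℕ) < 2 * r - 2) :
    Phi d r m Vert.x1 = Adeg m + m (.e ⟨0, h0⟩) := by
  rw [Phi_apply, evar_sum]
  have h1 : ∑ i, m (.a i) * Wf d r (.a i) Vert.x1 = Adeg m := by
    unfold Wf Adeg; simp [Finsupp.single_apply]
  have h2 : ∑ i, m (.b i) * Wf d r (.b i) Vert.x1 = 0 := by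
    unfold Wf; simp [Finsupp.single_apply]
  have h3 : ∑ t, m (.e t) * Wf d r (.e t) Vert.x1 = m (.e ⟨0, h0⟩) := by
    simp only [Wf_e_x1, mul_ite, mul_one, mul_zero]
    rw [Finset.sum_eq_single (⟨0, h0⟩ : Fin (2 * r - 2))]
    · simp
    · intro b _ hb
      rw [if_neg (by simpa [Fin.ext_iff] using hb)]
    · simp
  rw [h1, h2, h3, add_zero]

lemma Phi_x2 (m : EVar d r →₀ ℕ) (hL : 2 * r - 3 < 2 * r - 2) :
    Phi d r m Vert.x2 = Bdeg m + m (.e ⟨2 * r - 3, hL⟩) := by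
  rw [Phi_apply, evar_sum]
  have h1 : ∑ i, m (.a i) * Wf d r (.a i) Vert.x2 = 0 := by
    unfold Wf; simp [Finsupp.single_apply]
  have h2 : ∑ i, m (.b i) * Wf d r (.b i) Vert.x2 = Bdeg m := by
    unfold Wf Bdeg; simp [Finsupp.single_apply]
  have h3 : ∑ t, m (.e t) * Wf d r (.e t) Vert.x2 = m (.e ⟨2 * r - 3, hL⟩) := by
    simp only [Wf_e_x2, mul_ite, mul_one, mul_zero]
    rw [Finset.sum_eq_single (⟨2 * r - 3, hL⟩ : Fin (2 * r - 2))]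
    · simp
    · intro b _ hb
      rw [if_neg (by simpa [Fin.ext_iff] using hb)]
    · simp
  rw [h1, h2, h3, zero_add]

lemma Phi_y (m : EVar d r →₀ ℕ) (i : Fin d) :
    Phi d r m (Vert.y i) = m (.a i) + m (.b i) := by
  rw [Phi_apply, evar_sum]
  have h1 : ∑ j, m (.a j) * Wf d r (.a j) (Vert.y i) = m (.a i) := by
    unfold Wf
    simp only [Finsupp.add_apply, Finsupp.single_apply]
    rw [Finset.sum_eq_single i] <;> simp_all [eq_comm]
  have h2 : ∑ j, m (.b j) * Wf d r (.b j) (Vert.y i) = m (.b i) := by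
    unfold Wf
    simp only [Finsupp.add_apply, Finsupp.single_apply]
    rw [Finset.sum_eq_single i] <;> simp_all [eq_comm]
  have h3 : ∑ t, m (.e t) * Wf d r (.e t) (Vert.y i) = 0 := by
    simp [Wf_e_y]
  rw [h1, h2, h3, add_zero]

lemma Phi_z (m : EVar d r →₀ ℕ) (s : Fin (2 * r - 3))
    (h1 : s.val < 2 * r - 2) (h2 : s.val + 1 < 2 * r - 2) :
    Phi d r m (Vert.z s) = m (.e ⟨s.val, h1⟩) + m (.e ⟨s.val + 1, h2⟩) := by
  rw [Phi_apply, evar_sum]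
  have ha : ∑ j, m (.a j) * Wf d r (.a j) (Vert.z s) = 0 := by
    unfold Wf; simp [Finsupp.single_apply]
  have hb : ∑ j, m (.b j) * Wf d r (.b j) (Vert.z s) = 0 := by
    unfold Wf; simp [Finsupp.single_apply]
  have he : ∑ t, m (.e t) * Wf d r (.e t) (Vert.z s)
      = m (.e ⟨s.val + 1, h2⟩) + m (.e ⟨s.val, h1⟩) := by
    simp only [Wf_e_z, mul_add, mul_ite, mul_one, mul_zero]
    rw [Finset.sum_add_distrib]
    congr 1
    · rw [Finset.sum_eq_single (⟨s.val + 1, h2⟩ : Fin (2 * r - 2))]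
      · simp
      · intro b _ hb
        rw [if_neg (by simpa [Fin.ext_iff] using hb)]
      · simp
    · rw [Finset.sum_eq_single (⟨s.val, h1⟩ : Fin (2 * r - 2))]
      · simp
      · intro b _ hb
        rw [if_neg (by simpa [Fin.ext_iff] using hb)]
      · simp
  rw [ha, hb, he]
  omega

/-- Minimum of `m` over the odd-position `e`-variables. -/
noncomputable def minOdd (m : EVar d r →₀ ℕ) : ℕ :=
  sInf {n | ∃ t : Fin (2 * r - 2), t.val % 2 = 1 ∧ m (.e t) = n}

lemma minOdd_le (m : EVar d r →₀ ℕ) (t : Fin (2 * r - 2)) (h : t.val % 2 = 1) :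
    minOdd m ≤ m (.e t) := Nat.sInf_le ⟨t, h, rfl⟩

lemma minOdd_mem (m : EVar d r →₀ ℕ) (hr : 3 ≤ r) :
    ∃ t : Fin (2 * r - 2), t.val % 2 = 1 ∧ m (.e t) = minOdd m := by
  have : minOdd m ∈ {n | ∃ t : Fin (2 * r - 2), t.val % 2 = 1 ∧ m (.e t) = n} :=
    Nat.sInf_mem ⟨m (.e ⟨1, by omega⟩), ⟨1, by omega⟩, by norm_num, rfl⟩
  exact this

/-- The value used for the normal form reduction. -/
noncomputable def cval (m : EVar d r →₀ ℕ) : ℕ := min (Adeg m) (minOdd m)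

lemma cval_le_A (m : EVar d r →₀ ℕ) : cval m ≤ Adeg m := min_le_left _ _

lemma cval_le_odd (m : EVar d r →₀ ℕ) (t : Fin (2 * r - 2)) (h : t.val % 2 = 1) :
    cval m ≤ m (.e t) := le_trans (min_le_right _ _) (minOdd_le m t h)

/-- Partial sums of `δ`. -/
def pfun (δ : Fin d → ℕ) (j : ℕ) : ℕ :=
  ∑ x ∈ Finset.range j, (if h : x < d then δ ⟨x, h⟩ else 0)

lemma pfun_mono (δ : Fin d → ℕ) : Monotone (pfun δ) := by
  intro i j hij
  exact Finset.sum_le_sum_of_subset (Finset.range_subset_range.2 hij)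

lemma pfun_succ (δ : Fin d → ℕ) (i : Fin d) :
    pfun δ (i.val + 1) = pfun δ i.val + δ i := by
  rw [pfun, Finset.sum_range_succ, dif_pos i.isLt]
  rfl

lemma pfun_d (δ : Fin d → ℕ) : pfun δ d = ∑ i, δ i := by
  rw [pfun, ← Fin.sum_univ_eq_sum_range fun j => if h : j < d then δ ⟨j, h⟩ else 0]
  exact Finset.sum_congr rfl fun i _ => by rw [dif_pos i.isLt]

/-- Greedy filling of `n` units subject to the capacities `δ`. -/
def fill (δ : Fin d → ℕ) (n : ℕ) (i : Fin d) : ℕ :=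
  min n (pfun δ (i.val + 1)) - min n (pfun δ i.val)

lemma fill_le (δ : Fin d → ℕ) (n : ℕ) (i : Fin d) : fill δ n i ≤ δ i := by
  have := pfun_succ δ i
  rw [fill]
  omega

lemma sum_fill (δ : Fin d → ℕ) (n : ℕ) (h : n ≤ ∑ i, δ i) :
    ∑ i, fill δ n i = n := by
  have hmono : Monotone fun j => min n (pfun δ j) :=
    monotone_const.min (pfun_mono δ)
  have h2 := Finset.sum_range_tsub (f := fun j => min n (pfun δ j)) hmono d
  have h3 : ∑ i : Fin d, fill δ n i
      = ∑ j ∈ Finset.range d, (min n (pfun δ (j + 1)) - min n (pfun δ j)) :=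
    Fin.sum_univ_eq_sum_range (fun j => min n (pfun δ (j + 1)) - min n (pfun δ j)) d
  rw [h3, h2, pfun_d]
  have : pfun δ 0 = 0 := by rw [pfun]; simp
  rw [this]
  omega

end Aux2

section Aux3

variable (k : Type) [Field k] (d r : ℕ)

/-- The generating set of the span appearing in the statement. -/
def genSet : Set (MvPolynomial (EVar d r) k) :=
  ({f | ∃ i j : Fin d, i < j ∧
      f = X (EVar.a i) * X (EVar.b j) - X (EVar.b i) * X (EVar.a j)} ∪
   {f | ∃ i : Fin d,
      f = X (EVar.a i) * evenEProd k d r - X (EVar.b i) * oddEProd k d r})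

/-- The candidate ideal. -/
noncomputable def Jid : Ideal (MvPolynomial (EVar d r) k) := Ideal.span (genSet k d r)

/-- Exponent vector of `evenEProd`. -/
noncomputable def Eexp : EVar d r →₀ ℕ :=
  ∑ t ∈ Finset.univ.filter (fun t : Fin (2 * r - 2) => t.val % 2 = 1),
    Finsupp.single (.e t) 1

/-- Exponent vector of `oddEProd`. -/
noncomputable def Oexp : EVar d r →₀ ℕ :=
  ∑ t ∈ Finset.univ.filter (fun t : Fin (2 * r - 2) => t.val % 2 = 0),
    Finsupp.single (.e t) 1

variable {d r}

lemma sum_single_apply (s : Finset (Fin (2 * r - 2))) (u : EVar d r) :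
    (∑ t ∈ s, Finsupp.single (EVar.e t) 1 : EVar d r →₀ ℕ) u
      = ∑ t ∈ s, (if EVar.e t = u then 1 else 0) := by
  rw [Finsupp.finset_sum_apply]
  exact Finset.sum_congr rfl fun t _ => Finsupp.single_apply

lemma Eexp_apply_e (t : Fin (2 * r - 2)) :
    Eexp d r (.e t) = if t.val % 2 = 1 then 1 else 0 := by
  rw [Eexp, sum_single_apply]
  simp only [EVar.e.injEq]
  rw [Finset.sum_ite_eq' _ t (fun _ => 1)]
  simp

lemma Oexp_apply_e (t : Fin (2 * r - 2)) :
    Oexp d r (.e t) = if t.val % 2 = 0 then 1 else 0 := by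
  rw [Oexp, sum_single_apply]
  simp only [EVar.e.injEq]
  rw [Finset.sum_ite_eq' _ t (fun _ => 1)]
  simp

lemma Eexp_apply_a (i : Fin d) : Eexp d r (.a i) = 0 := by
  rw [Eexp, sum_single_apply]; simp

lemma Eexp_apply_b (i : Fin d) : Eexp d r (.b i) = 0 := by
  rw [Eexp, sum_single_apply]; simp

lemma Oexp_apply_a (i : Fin d) : Oexp d r (.a i) = 0 := by
  rw [Oexp, sum_single_apply]; simp

lemma Oexp_apply_b (i : Fin d) : Oexp d r (.b i) = 0 := by
  rw [Oexp, sum_single_apply]; simp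

lemma prod_X_eq_monomial {σ : Type*} {ι : Type*} [DecidableEq σ] (s : Finset ι)
    (f : ι → σ) :
    (∏ x ∈ s, (X (f x) : MvPolynomial σ k))
      = monomial (∑ x ∈ s, Finsupp.single (f x) 1) 1 := by
  classical
  induction s using Finset.induction with
  | empty => simp [monomial_zero', C_1]
  | insert _ _ hx ih =>
    rw [Finset.prod_insert hx, Finset.sum_insert hx, ih, X, monomial_mul, one_mul]

lemma evenEProd_eq : evenEProd k d r = monomial (Eexp d r) 1 :=
  prod_X_eq_monomial k _ _

lemma oddEProd_eq : oddEProd k d r = monomial (Oexp d r) 1 :=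
  prod_X_eq_monomial k _ _

lemma X_mul_monomial (v : EVar d r) (u : EVar d r →₀ ℕ) :
    (X v : MvPolynomial (EVar d r) k) * monomial u 1
      = monomial (Finsupp.single v 1 + u) 1 := by
  rw [X, monomial_mul, one_mul]

lemma gen1_mem (i j : Fin d) (h : i < j) :
    monomial (Finsupp.single (EVar.a i) 1 + Finsupp.single (EVar.b j) 1) (1:k)
      - monomial (Finsupp.single (EVar.b i) 1 + Finsupp.single (EVar.a j) 1) 1
      ∈ Jid k d r := by
  apply Ideal.subset_span
  left
  refine ⟨i, j, h, ?_⟩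
  have hx : ∀ v w : EVar d r, (X v * X w : MvPolynomial (EVar d r) k)
      = monomial (Finsupp.single v 1 + Finsupp.single w 1) 1 := by
    intro v w
    rw [X, X, monomial_mul, one_mul]
  rw [hx, hx]

lemma gen2_mem (i : Fin d) :
    monomial (Finsupp.single (EVar.a i) 1 + Eexp d r) (1:k)
      - monomial (Finsupp.single (EVar.b i) 1 + Oexp d r) 1
      ∈ Jid k d r := by
  apply Ideal.subset_span
  right
  refine ⟨i, ?_⟩
  rw [evenEProd_eq, oddEProd_eq, X_mul_monomial, X_mul_monomial]

lemma shift_mem (u v₁ v₂ : EVar d r →₀ ℕ)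
    (h : monomial v₁ (1:k) - monomial v₂ 1 ∈ Jid k d r) :
    monomial (u + v₁) (1:k) - monomial (u + v₂) 1 ∈ Jid k d r := by
  have : monomial (u + v₁) (1:k) - monomial (u + v₂) 1
      = monomial u 1 * (monomial v₁ 1 - monomial v₂ 1) := by
    rw [mul_sub, monomial_mul, monomial_mul, one_mul]
  rw [this]
  exact Ideal.mul_mem_left _ _ h

lemma split_one (F : Fin d → ℕ) (i : Fin d) :
    ∑ x, F x = F i + ∑ x ∈ Finset.univ.erase i, F x :=
  (Finset.add_sum_erase _ F (Finset.mem_univ i)).symm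

lemma split_two (F : Fin d → ℕ) (i j : Fin d) (hij : i ≠ j) :
    ∑ x, F x = F i + (F j + ∑ x ∈ (Finset.univ.erase i).erase j, F x) := by
  rw [split_one F i]
  congr 1
  exact (Finset.add_sum_erase _ F (Finset.mem_erase.2 ⟨hij.symm, Finset.mem_univ j⟩)).symm

/-- Stage 1: lower the `a`-degree by `c` using the long generators. -/
lemma stage1 (c : ℕ) : ∀ m : EVar d r →₀ ℕ, c ≤ Adeg m →
    (∀ t : Fin (2 * r - 2), t.val % 2 = 1 → c ≤ m (.e t)) →
    ∃ m₂ : EVar d r →₀ ℕ,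
      (monomial m (1:k) - monomial m₂ 1 ∈ Jid k d r) ∧
      (∀ i, m₂ (.a i) + m₂ (.b i) = m (.a i) + m (.b i)) ∧
      Adeg m₂ = Adeg m - c ∧
      (∀ t : Fin (2 * r - 2),
        m₂ (.e t) = if t.val % 2 = 1 then m (.e t) - c else m (.e t) + c) := by
  induction c with
  | zero =>
    intro m _ _
    exact ⟨m, by rw [sub_self]; exact Ideal.zero_mem _, fun i => rfl, by omega, fun t => by split_ifs <;> omega⟩
  | succ c ih =>
    intro m hA hodd
    have hA1 : 0 < Adeg m := by omega
    have hex : ∃ i, 0 < m (.a i) := by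
      by_contra hc
      push_neg at hc
      have : Adeg m = 0 := Finset.sum_eq_zero fun i _ => by have := hc i; omega
      omega
    obtain ⟨i, hi⟩ := hex
    set v : EVar d r →₀ ℕ := Finsupp.single (.a i) 1 + Eexp d r with hv
    have hvle : v ≤ m := by
      rw [Finsupp.le_def]
      intro u
      rw [hv, Finsupp.add_apply]
      cases u with
      | a x =>
        rw [Eexp_apply_a, Finsupp.single_apply]
        split_ifs with h
        · cases h; omega
        · omega
      | b x => rw [Eexp_apply_b, Finsupp.single_apply]; simp
      | e t =>
        rw [Eexp_apply_e, Finsupp.single_apply, if_neg (by simp)]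
        split_ifs with h
        · have := hodd t h; omega
        · omega
    set u₀ : EVar d r →₀ ℕ := m - v with hu₀
    have hm : u₀ + v = m := tsub_add_cancel_of_le hvle
    set m₁ : EVar d r →₀ ℕ := u₀ + (Finsupp.single (.b i) 1 + Oexp d r) with hm₁
    have hmem : monomial m (1:k) - monomial m₁ 1 ∈ Jid k d r := by
      rw [← hm, hm₁]
      exact shift_mem k u₀ _ _ (gen2_mem k i)
    -- pointwise values of m₁
    have hval_a : ∀ x, m₁ (.a x) = m (.a x) - (if i = x then 1 else 0) := by
      intro x
      simp only [hm₁, hu₀, hv, Finsupp.add_apply, Finsupp.tsub_apply,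
        Eexp_apply_a, Oexp_apply_a, Finsupp.single_apply, EVar.a.injEq,
        reduceCtorEq, if_false, add_zero, zero_add]
      all_goals (split_ifs <;> omega)
    have hval_b : ∀ x, m₁ (.b x) = m (.b x) + (if i = x then 1 else 0) := by
      intro x
      simp only [hm₁, hu₀, hv, Finsupp.add_apply, Finsupp.tsub_apply,
        Eexp_apply_b, Oexp_apply_b, Finsupp.single_apply, EVar.b.injEq,
        reduceCtorEq, if_false, add_zero, zero_add]
      all_goals (split_ifs <;> omega)
    have hval_e : ∀ t : Fin (2 * r - 2),
        m₁ (.e t) = if t.val % 2 = 1 then m (.e t) - 1 else m (.e t) + 1 := by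
      intro t
      simp only [hm₁, hu₀, hv, Finsupp.add_apply, Finsupp.tsub_apply,
        Eexp_apply_e, Oexp_apply_e, Finsupp.single_apply,
        reduceCtorEq, if_false, add_zero, zero_add]
      all_goals (split_ifs <;> omega)
    have hA₁ : Adeg m₁ = Adeg m - 1 := by
      rw [Adeg, Adeg, split_one (fun x => m₁ (.a x)) i, split_one (fun x => m (.a x)) i,
        Finset.sum_congr rfl (fun x hx => by
          rw [hval_a x, if_neg (Ne.symm (Finset.mem_erase.1 hx).1), Nat.sub_zero])]
      rw [hval_a i, if_pos rfl]
      omega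
    have hodd₁ : ∀ t : Fin (2 * r - 2), t.val % 2 = 1 → c ≤ m₁ (.e t) := by
      intro t ht
      rw [hval_e t, if_pos ht]
      have := hodd t ht
      omega
    obtain ⟨m₂, h2mem, h2δ, h2A, h2e⟩ := ih m₁ (by omega) hodd₁
    refine ⟨m₂, ?_, ?_, ?_, ?_⟩
    · have := Ideal.add_mem _ hmem h2mem
      rwa [sub_add_sub_cancel] at this
    · intro x
      rw [h2δ x, hval_a x, hval_b x]
      split_ifs with h
      · subst h; omega
      · omega
    · rw [h2A, hA₁]; omega
    · intro t
      rw [h2e t, hval_e t]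
      by_cases h : t.val % 2 = 1
      · have h4 := hodd t h
        simp only [if_pos h]
        omega
      · simp only [if_neg h]
        omega

/-- Stage 2: rearrangement of the `a`/`b` exponents using the quadratic generators. -/
lemma stage2 : ∀ D : ℕ, ∀ m m' : EVar d r →₀ ℕ,
    (∀ i, m (.a i) + m (.b i) = m' (.a i) + m' (.b i)) →
    Adeg m = Adeg m' →
    (∀ t, m (.e t) = m' (.e t)) →
    (∑ i, ((m (.a i) - m' (.a i)) + (m' (.a i) - m (.a i)))) ≤ D →
    monomial m (1:k) - monomial m' 1 ∈ Jid k d r := by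
  intro D
  induction D with
  | zero =>
    intro m m' hδ hA he hD
    have ha : ∀ i, m (.a i) = m' (.a i) := by
      intro i
      have : ((m (.a i) - m' (.a i)) + (m' (.a i) - m (.a i))) = 0 :=
        Nat.le_zero.1 (le_trans (Finset.single_le_sum
          (f := fun i => ((m (.a i) - m' (.a i)) + (m' (.a i) - m (.a i))))
          (fun _ _ => Nat.zero_le _) (Finset.mem_univ i)) hD)
      omega
    have : m = m' := by
      ext u
      cases u with
      | a x => exact ha x
      | b x => have := hδ x; have := ha x; omega
      | e t => exact he t
    rw [this, sub_self]
    exact Ideal.zero_mem _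
  | succ D ih =>
    intro m m' hδ hA he hD
    by_cases hsame : ∀ i, m (.a i) = m' (.a i)
    · have : m = m' := by
        ext u
        cases u with
        | a x => exact hsame x
        | b x => have := hδ x; have := hsame x; omega
        | e t => exact he t
      rw [this, sub_self]
      exact Ideal.zero_mem _
    push_neg at hsame
    obtain ⟨i₀, hi₀⟩ := hsame
    have hlt : ∃ i, m (.a i) < m' (.a i) := by
      by_contra hc
      push_neg at hc
      have : Adeg m' < Adeg m :=
        Finset.sum_lt_sum (fun i _ => hc i)
          ⟨i₀, Finset.mem_univ _, by have := hc i₀; omega⟩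
      omega
    have hgt : ∃ j, m' (.a j) < m (.a j) := by
      by_contra hc
      push_neg at hc
      have : Adeg m < Adeg m' :=
        Finset.sum_lt_sum (fun i _ => hc i)
          ⟨i₀, Finset.mem_univ _, by have := hc i₀; omega⟩
      omega
    obtain ⟨i, hi⟩ := hlt
    obtain ⟨j, hj⟩ := hgt
    have hij : i ≠ j := by rintro rfl; omega
    have hbi : 0 < m (.b i) := by have := hδ i; omega
    have haj : 0 < m (.a j) := by omega
    set v : EVar d r →₀ ℕ := Finsupp.single (.b i) 1 + Finsupp.single (.a j) 1 with hv
    have hvle : v ≤ m := by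
      rw [Finsupp.le_def]
      intro u
      rw [hv, Finsupp.add_apply, Finsupp.single_apply, Finsupp.single_apply]
      cases u with
      | a x =>
        simp only [reduceCtorEq, if_false, EVar.a.injEq, zero_add]
        split_ifs with h
        · cases h; omega
        · omega
      | b x =>
        simp only [reduceCtorEq, if_false, EVar.b.injEq, add_zero]
        split_ifs with h
        · cases h; omega
        · omega
      | e t => simp
    set u₀ : EVar d r →₀ ℕ := m - v with hu₀
    have hm : u₀ + v = m := tsub_add_cancel_of_le hvle
    set m'' : EVar d r →₀ ℕ :=
      u₀ + (Finsupp.single (.a i) 1 + Finsupp.single (.b j) 1) with hm''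
    have hmem : monomial m (1:k) - monomial m'' 1 ∈ Jid k d r := by
      rcases lt_or_gt_of_ne hij with h | h
      · have h1 := shift_mem k u₀ _ _ (gen1_mem k i j h)
        have e1 : u₀ + (Finsupp.single (EVar.a i) 1 + Finsupp.single (EVar.b j) 1)
            = m'' := by rw [hm'']
        have e2 : u₀ + (Finsupp.single (EVar.b i) 1 + Finsupp.single (EVar.a j) 1)
            = m := by rw [← hm, hv]
        rw [e1, e2] at h1
        have h2 := neg_mem h1
        rwa [neg_sub] at h2
      · have h1 := shift_mem k u₀ _ _ (gen1_mem k j i h)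
        have e1 : u₀ + (Finsupp.single (EVar.a j) 1 + Finsupp.single (EVar.b i) 1)
            = m := by rw [← hm, hv, add_comm (Finsupp.single (EVar.a j) 1)]
        have e2 : u₀ + (Finsupp.single (EVar.b j) 1 + Finsupp.single (EVar.a i) 1)
            = m'' := by rw [hm'', add_comm (Finsupp.single (EVar.b j) 1)]
        rw [e1, e2] at h1
        exact h1
    have hval_a : ∀ x, m'' (.a x)
        = if j = x then m (.a x) - 1 else if i = x then m (.a x) + 1 else m (.a x) := by
      intro x
      simp only [hm'', hu₀, hv, Finsupp.add_apply, Finsupp.tsub_apply,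
        Finsupp.single_apply, EVar.a.injEq, reduceCtorEq, if_false, add_zero,
        zero_add]
      have hij' : i = x → j = x → False := fun h1 h2 => hij (h1.trans h2.symm)
      split_ifs <;> first | omega | (exfalso; exact hij' (by assumption) (by assumption))
    have hval_b : ∀ x, m'' (.b x)
        = if i = x then m (.b x) - 1 else if j = x then m (.b x) + 1 else m (.b x) := by
      intro x
      simp only [hm'', hu₀, hv, Finsupp.add_apply, Finsupp.tsub_apply,
        Finsupp.single_apply, EVar.b.injEq, reduceCtorEq, if_false, add_zero,
        zero_add]
      have hij' : i = x → j = x → False := fun h1 h2 => hij (h1.trans h2.symm)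
      split_ifs <;> first | omega | (exfalso; exact hij' (by assumption) (by assumption))
    have hval_e : ∀ t, m'' (.e t) = m (.e t) := by
      intro t
      simp only [hm'', hu₀, hv, Finsupp.add_apply, Finsupp.tsub_apply,
        Finsupp.single_apply, reduceCtorEq, if_false, add_zero, zero_add,
        Nat.sub_zero]
    have hδ'' : ∀ x, m'' (.a x) + m'' (.b x) = m' (.a x) + m' (.b x) := by
      intro x
      have hδx := hδ x
      rw [hval_a x, hval_b x]
      by_cases h1 : j = x
      · rw [if_pos h1, if_neg (fun h => hij (h.trans h1.symm)), if_pos h1]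
        subst h1
        omega
      · rw [if_neg h1]
        by_cases h2 : i = x
        · rw [if_pos h2, if_pos h2]
          subst h2
          omega
        · rw [if_neg h2, if_neg h2, if_neg h1]
          exact hδx
    have hA'' : Adeg m'' = Adeg m' := by
      rw [← hA, Adeg, Adeg, split_two (fun x => m'' (.a x)) i j hij,
        split_two (fun x => m (.a x)) i j hij]
      have hrest : ∑ x ∈ (Finset.univ.erase i).erase j, m'' (.a x)
          = ∑ x ∈ (Finset.univ.erase i).erase j, m (.a x) := by
        refine Finset.sum_congr rfl fun x hx => ?_
        have hx1 := (Finset.mem_erase.1 hx).1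
        have hx2 := (Finset.mem_erase.1 (Finset.mem_erase.1 hx).2).1
        rw [hval_a x, if_neg (Ne.symm hx2), if_neg (Ne.symm hx1)]
      rw [hrest, hval_a i, if_neg (show ¬ j = i from fun h => hij h.symm), if_pos rfl,
        hval_a j, if_pos rfl]
      omega
    have hdist : (∑ x, ((m'' (.a x) - m' (.a x)) + (m' (.a x) - m'' (.a x)))) ≤ D := by
      have hsplit1 := split_two
        (fun x => ((m'' (.a x) - m' (.a x)) + (m' (.a x) - m'' (.a x)))) i j hij
      have hsplit2 := split_two
        (fun x => ((m (.a x) - m' (.a x)) + (m' (.a x) - m (.a x)))) i j hij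
      have hrest : ∑ x ∈ (Finset.univ.erase i).erase j,
            ((m'' (.a x) - m' (.a x)) + (m' (.a x) - m'' (.a x)))
          = ∑ x ∈ (Finset.univ.erase i).erase j,
            ((m (.a x) - m' (.a x)) + (m' (.a x) - m (.a x))) := by
        refine Finset.sum_congr rfl fun x hx => ?_
        have hx1 := (Finset.mem_erase.1 hx).1
        have hx2 := (Finset.mem_erase.1 (Finset.mem_erase.1 hx).2).1
        rw [hval_a x, if_neg (Ne.symm hx2), if_neg (Ne.symm hx1)]
      have hvi : m'' (.a i) = m (.a i) + 1 := by
        rw [hval_a i, if_neg (show ¬ j = i from fun h => hij h.symm), if_pos rfl]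
      have hvj : m'' (.a j) = m (.a j) - 1 := by
        rw [hval_a j, if_pos rfl]
      rw [hrest, hvi, hvj] at hsplit1
      omega
    have hih := ih m'' m' hδ'' hA'' (fun t => by rw [hval_e t]; exact he t) hdist
    have := Ideal.add_mem _ hmem hih
    rwa [sub_add_sub_cancel] at this

section Aux4

variable {d r : ℕ}

/-- The normal form of a monomial exponent vector. -/
noncomputable def nf (m : EVar d r →₀ ℕ) : EVar d r →₀ ℕ :=
  Finsupp.equivFunOnFinite.symm fun u =>
    match u with
    | .a i => fill (fun x => m (.a x) + m (.b x)) (Adeg m - cval m) i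
    | .b i => (m (.a i) + m (.b i))
        - fill (fun x => m (.a x) + m (.b x)) (Adeg m - cval m) i
    | .e t => if t.val % 2 = 1 then m (.e t) - cval m else m (.e t) + cval m

lemma nf_a (m : EVar d r →₀ ℕ) (i : Fin d) :
    nf m (.a i) = fill (fun x => m (.a x) + m (.b x)) (Adeg m - cval m) i := rfl

lemma nf_b (m : EVar d r →₀ ℕ) (i : Fin d) :
    nf m (.b i) = (m (.a i) + m (.b i))
      - fill (fun x => m (.a x) + m (.b x)) (Adeg m - cval m) i := rfl

lemma nf_e (m : EVar d r →₀ ℕ) (t : Fin (2 * r - 2)) :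
    nf m (.e t) = if t.val % 2 = 1 then m (.e t) - cval m else m (.e t) + cval m := rfl

lemma Adeg_le_sum (m : EVar d r →₀ ℕ) :
    Adeg m ≤ ∑ i, (m (.a i) + m (.b i)) :=
  Finset.sum_le_sum fun i _ => Nat.le_add_right _ _

lemma Adeg_nf (m : EVar d r →₀ ℕ) : Adeg (nf m) = Adeg m - cval m := by
  rw [Adeg]
  rw [Finset.sum_congr rfl fun i _ => nf_a m i]
  exact sum_fill _ _ (le_trans (Nat.sub_le _ _) (Adeg_le_sum m))

/-- Lemma B : every monomial is congruent to its normal form mod `Jid`. -/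
lemma nf_connect (k : Type) [Field k] (hr : 3 ≤ r) (m : EVar d r →₀ ℕ) :
    monomial m (1:k) - monomial (nf m) 1 ∈ Jid k d r := by
  obtain ⟨m₂, hmem, hδ, hA, he⟩ :=
    stage1 k (cval m) m (cval_le_A m) (fun t ht => cval_le_odd m t ht)
  have h2 : monomial m₂ (1:k) - monomial (nf m) 1 ∈ Jid k d r := by
    refine stage2 k (∑ x, ((m₂ (.a x) - nf m (.a x)) + (nf m (.a x) - m₂ (.a x))))
      m₂ (nf m) ?_ ?_ ?_ le_rfl
    · intro i
      rw [nf_a, nf_b, hδ i]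
      have := fill_le (fun x => m (.a x) + m (.b x)) (Adeg m - cval m) i
      omega
    · rw [Adeg_nf, hA]
    · intro t
      rw [nf_e, he t]
  have := Ideal.add_mem _ hmem h2
  rwa [sub_add_sub_cancel] at this

/-- Lemma A : the normal form has the same image under `Phi`. -/
lemma Phi_nf (hr : 3 ≤ r) (m : EVar d r →₀ ℕ) : Phi d r (nf m) = Phi d r m := by
  have h0 : (0:ℕ) < 2 * r - 2 := by omega
  have hL : 2 * r - 3 < 2 * r - 2 := by omega
  have hcA := cval_le_A m
  ext v
  cases v with
  | x1 =>
    rw [Phi_x1 _ h0, Phi_x1 _ h0, Adeg_nf, nf_e]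
    rw [if_neg (by norm_num)]
    omega
  | x2 =>
    rw [Phi_x2 _ hL, Phi_x2 _ hL, nf_e]
    have hodd : (2 * r - 3) % 2 = 1 := by omega
    rw [if_pos hodd]
    have hce := cval_le_odd m ⟨2 * r - 3, hL⟩ hodd
    have hBnf : Bdeg (nf m) = (∑ i, (m (.a i) + m (.b i))) - (Adeg m - cval m) := by
      have hdist := Finset.sum_tsub_distrib (f := fun i => m (.a i) + m (.b i))
        (g := fun i => fill (fun x => m (.a x) + m (.b x)) (Adeg m - cval m) i)
        Finset.univ (fun i _ => fill_le _ _ i)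
      rw [Bdeg, Finset.sum_congr rfl fun i _ => nf_b m i, hdist,
        sum_fill _ _ (le_trans (Nat.sub_le _ _) (Adeg_le_sum m))]
    have hAB : (∑ i, (m (.a i) + m (.b i))) = Adeg m + Bdeg m := by
      rw [Adeg, Bdeg, ← Finset.sum_add_distrib]
    rw [hBnf, hAB]
    omega
  | y i =>
    rw [Phi_y, Phi_y, nf_a, nf_b]
    have := fill_le (fun x => m (.a x) + m (.b x)) (Adeg m - cval m) i
    omega
  | z s =>
    have hs1 : s.val < 2 * r - 2 := by have := s.isLt; omega
    have hs2 : s.val + 1 < 2 * r - 2 := by have := s.isLt; omega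
    rw [Phi_z _ s hs1 hs2, Phi_z _ s hs1 hs2, nf_e, nf_e]
    dsimp only
    rcases Nat.mod_two_eq_zero_or_one s.val with hpar | hpar
    · rw [if_neg (by omega), if_pos (show (s.val + 1) % 2 = 1 by omega)]
      have : cval m ≤ m (.e ⟨s.val + 1, hs2⟩) := cval_le_odd m ⟨s.val + 1, hs2⟩ (show (s.val + 1) % 2 = 1 by omega)
      omega
    · rw [if_pos hpar, if_neg (by omega)]
      have := cval_le_odd m ⟨s.val, hs1⟩ hpar
      omega

/-- Lemma C′ : the normal form only depends on the image under `Phi`. -/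
lemma nf_eq_of_Phi_eq (hr : 3 ≤ r) (m m' : EVar d r →₀ ℕ)
    (h : Phi d r m = Phi d r m') : nf m = nf m' := by
  have h0 : (0:ℕ) < 2 * r - 2 := by omega
  have hL : 2 * r - 3 < 2 * r - 2 := by omega
  -- pointwise consequences
  have hy : ∀ i, m (.a i) + m (.b i) = m' (.a i) + m' (.b i) := by
    intro i
    have := DFunLike.congr_fun h (Vert.y i)
    rwa [Phi_y, Phi_y] at this
  have hz : ∀ s : Fin (2 * r - 3),
      m (.e ⟨s.val, by omega⟩) + m (.e ⟨s.val + 1, by omega⟩)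
        = m' (.e ⟨s.val, by omega⟩) + m' (.e ⟨s.val + 1, by omega⟩) := by
    intro s
    have hthis := DFunLike.congr_fun h (Vert.z s)
    rw [Phi_z m s (by omega) (by omega), Phi_z m' s (by omega) (by omega)] at hthis
    exact hthis
  set c₀ : ℤ := (m' (.e ⟨0, h0⟩) : ℤ) - m (.e ⟨0, h0⟩) with hc₀
  have key : ∀ n (hn : n < 2 * r - 2),
      (m' (.e ⟨n, hn⟩) : ℤ)
        = if n % 2 = 0 then (m (.e ⟨n, hn⟩) : ℤ) + c₀ else (m (.e ⟨n, hn⟩) : ℤ) - c₀ := by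
    intro n
    induction n with
    | zero => intro hn; rw [if_pos rfl, hc₀]; push_cast; ring
    | succ n ih =>
      intro hn
      have hs : n < 2 * r - 3 := by omega
      have hznz := hz ⟨n, hs⟩
      have ihn := ih (by omega)
      have hcast : ((m (.e ⟨n, by omega⟩) : ℤ) + m (.e ⟨n + 1, hn⟩))
          = ((m' (.e ⟨n, by omega⟩) : ℤ) + m' (.e ⟨n + 1, hn⟩)) := by
        exact_mod_cast congrArg (Nat.cast : ℕ → ℤ) hznz
      by_cases hp : n % 2 = 0
      · rw [if_pos hp] at ihn
        rw [if_neg (by omega)]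
        omega
      · rw [if_neg hp] at ihn
        rw [if_pos (by omega)]
        omega
  have hx1 : Adeg m + m (.e ⟨0, h0⟩) = Adeg m' + m' (.e ⟨0, h0⟩) := by
    have := DFunLike.congr_fun h Vert.x1
    rwa [Phi_x1 _ h0, Phi_x1 _ h0] at this
  have hA' : (Adeg m' : ℤ) = Adeg m - c₀ := by
    have h00 := key 0 h0
    rw [if_pos rfl] at h00
    have : (Adeg m : ℤ) + m (.e ⟨0, h0⟩) = Adeg m' + m' (.e ⟨0, h0⟩) := by
      exact_mod_cast congrArg (Nat.cast : ℕ → ℤ) hx1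
    omega
  have hodd' : ∀ t : Fin (2 * r - 2), t.val % 2 = 1 →
      (m' (.e t) : ℤ) = m (.e t) - c₀ := by
    intro t ht
    have := key t.val t.isLt
    rw [if_neg (by omega)] at this
    have he : (⟨t.val, t.isLt⟩ : Fin (2 * r - 2)) = t := rfl
    rwa [he] at this
  have hmin : (minOdd m' : ℤ) = minOdd m - c₀ := by
    obtain ⟨t1, ht1, he1⟩ := minOdd_mem m hr
    obtain ⟨t2, ht2, he2⟩ := minOdd_mem m' hr
    have l1 : minOdd m' ≤ m' (.e t1) := minOdd_le m' t1 ht1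
    have l2 : minOdd m ≤ m (.e t2) := minOdd_le m t2 ht2
    have e1 := hodd' t1 ht1
    have e2 := hodd' t2 ht2
    omega
  have hcv : (cval m' : ℤ) = cval m - c₀ ∧ cval m ≤ Adeg m ∧ cval m' ≤ Adeg m' := by
    refine ⟨?_, cval_le_A m, cval_le_A m'⟩
    rw [cval, cval]
    push_cast [Nat.cast_min]
    omega
  obtain ⟨hcv, hcA, hcA'⟩ := hcv
  have hAc : Adeg m - cval m = Adeg m' - cval m' := by omega
  have hδf : (fun x => m (.a x) + m (.b x)) = fun x => m' (.a x) + m' (.b x) :=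
    funext fun x => hy x
  ext u
  cases u with
  | a i => rw [nf_a, nf_a, hAc, hδf]
  | b i => rw [nf_b, nf_b, hAc, hδf, hy i]
  | e t =>
    rw [nf_e, nf_e]
    have hkey := key t.val t.isLt
    have he : (⟨t.val, t.isLt⟩ : Fin (2 * r - 2)) = t := rfl
    rw [he] at hkey
    by_cases hp : t.val % 2 = 1
    · rw [if_pos hp, if_pos hp, if_neg (by omega)] at *
      have c1 := cval_le_odd m t hp
      have c2 := cval_le_odd m' t hp
      omega
    · rw [if_neg hp, if_neg hp, if_pos (by omega)] at *
      omega

end Aux4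

section Aux5

variable (k : Type) [Field k] {d r : ℕ}

lemma X_mul_X (v w : EVar d r) :
    (X v * X w : MvPolynomial (EVar d r) k)
      = monomial (Finsupp.single v 1 + Finsupp.single w 1) 1 := by
  rw [X, X, monomial_mul, one_mul]

lemma Phi_gen1 (i j : Fin d) :
    Phi d r (Finsupp.single (EVar.a i) 1 + Finsupp.single (EVar.b j) 1)
      = Phi d r (Finsupp.single (EVar.b i) 1 + Finsupp.single (EVar.a j) 1) := by
  have hs : ∀ u : EVar d r, Phi d r (Finsupp.single u 1) = Wf d r u := by
    intro u
    rw [Phi, Finsupp.linearCombination_single, one_smul]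
  rw [map_add, map_add, hs, hs, hs, hs]
  have hWa : ∀ x : Fin d, Wf d r (.a x)
      = Finsupp.single Vert.x1 1 + Finsupp.single (Vert.y x) 1 := fun x => rfl
  have hWb : ∀ x : Fin d, Wf d r (.b x)
      = Finsupp.single Vert.x2 1 + Finsupp.single (Vert.y x) 1 := fun x => rfl
  rw [hWa, hWb, hWa, hWb]
  abel

lemma Phi_gen2 (hr : 3 ≤ r) (i : Fin d) :
    Phi d r (Finsupp.single (EVar.a i) 1 + Eexp d r)
      = Phi d r (Finsupp.single (EVar.b i) 1 + Oexp d r) := by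
  have h0 : (0:ℕ) < 2 * r - 2 := by omega
  have hL : 2 * r - 3 < 2 * r - 2 := by omega
  set v1 : EVar d r →₀ ℕ := Finsupp.single (EVar.a i) 1 + Eexp d r with hv1
  set v2 : EVar d r →₀ ℕ := Finsupp.single (EVar.b i) 1 + Oexp d r with hv2
  have hv1a : ∀ x, v1 (.a x) = if i = x then 1 else 0 := by
    intro x
    rw [hv1, Finsupp.add_apply, Eexp_apply_a, Finsupp.single_apply]
    simp [EVar.a.injEq]
  have hv1b : ∀ x, v1 (.b x) = 0 := by
    intro x
    rw [hv1, Finsupp.add_apply, Eexp_apply_b, Finsupp.single_apply]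
    simp
  have hv1e : ∀ t : Fin (2 * r - 2), v1 (.e t) = if t.val % 2 = 1 then 1 else 0 := by
    intro t
    rw [hv1, Finsupp.add_apply, Eexp_apply_e, Finsupp.single_apply]
    simp
  have hv2a : ∀ x, v2 (.a x) = 0 := by
    intro x
    rw [hv2, Finsupp.add_apply, Oexp_apply_a, Finsupp.single_apply]
    simp
  have hv2b : ∀ x, v2 (.b x) = if i = x then 1 else 0 := by
    intro x
    rw [hv2, Finsupp.add_apply, Oexp_apply_b, Finsupp.single_apply]
    simp [EVar.b.injEq]
  have hv2e : ∀ t : Fin (2 * r - 2), v2 (.e t) = if t.val % 2 = 0 then 1 else 0 := by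
    intro t
    rw [hv2, Finsupp.add_apply, Oexp_apply_e, Finsupp.single_apply]
    simp
  have hA1 : Adeg v1 = 1 := by
    rw [Adeg, Finset.sum_congr rfl fun x _ => hv1a x, Finset.sum_ite_eq]
    simp
  have hA2 : Adeg v2 = 0 := by
    rw [Adeg]
    exact Finset.sum_eq_zero fun x _ => hv2a x
  have hB1 : Bdeg v1 = 0 := by
    rw [Bdeg]
    exact Finset.sum_eq_zero fun x _ => hv1b x
  have hB2 : Bdeg v2 = 1 := by
    rw [Bdeg, Finset.sum_congr rfl fun x _ => hv2b x, Finset.sum_ite_eq]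
    simp
  ext w
  cases w with
  | x1 =>
    rw [Phi_x1 _ h0, Phi_x1 _ h0, hA1, hA2, hv1e, hv2e]
    dsimp only
    norm_num
  | x2 =>
    rw [Phi_x2 _ hL, Phi_x2 _ hL, hB1, hB2, hv1e, hv2e]
    dsimp only
    have : (2 * r - 3) % 2 = 1 := by omega
    rw [if_pos this, if_neg (by omega)]
  | y x =>
    rw [Phi_y, Phi_y, hv1a, hv1b, hv2a, hv2b]
    omega
  | z s =>
    have hs1 : s.val < 2 * r - 2 := by have := s.isLt; omega
    have hs2 : s.val + 1 < 2 * r - 2 := by have := s.isLt; omega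
    rw [Phi_z _ s hs1 hs2, Phi_z _ s hs1 hs2, hv1e, hv1e, hv2e, hv2e]
    dsimp only
    split_ifs <;> omega

lemma Jid_le_ker (hr : 3 ≤ r) :
    Jid k d r ≤ RingHom.ker (MvPolynomial.aeval (edgeImage k d r)).toRingHom := by
  rw [Jid, Ideal.span_le]
  rintro f (⟨i, j, hij, rfl⟩ | ⟨i, rfl⟩) <;>
    rw [SetLike.mem_coe, RingHom.mem_ker]
  · show aeval (edgeImage k d r) _ = 0
    rw [X_mul_X, X_mul_X, map_sub, aeval_monomial_eq, aeval_monomial_eq,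
      Phi_gen1, sub_self]
  · show aeval (edgeImage k d r) _ = 0
    rw [evenEProd_eq, oddEProd_eq, X_mul_monomial, X_mul_monomial, map_sub,
      aeval_monomial_eq, aeval_monomial_eq, Phi_gen2 hr i, sub_self]

lemma ker_le_Jid (hr : 3 ≤ r) :
    RingHom.ker (MvPolynomial.aeval (edgeImage k d r)).toRingHom ≤ Jid k d r := by
  intro p hp
  have hp0 : aeval (edgeImage k d r) p = 0 := hp
  set q : MvPolynomial (EVar d r) k :=
    ∑ m ∈ p.support, monomial (nf m) (coeff m p) with hq
  have hpq : p - q ∈ Jid k d r := by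
    have hrepr : p - q
        = ∑ m ∈ p.support, (monomial m (coeff m p) - monomial (nf m) (coeff m p)) := by
      rw [Finset.sum_sub_distrib, ← hq, ← p.as_sum]
    rw [hrepr]
    refine Ideal.sum_mem _ fun m hm => ?_
    have hfac : monomial m (coeff m p) - monomial (nf m) (coeff m p)
        = C (coeff m p) * (monomial m 1 - monomial (nf m) 1) := by
      rw [mul_sub, C_mul_monomial, C_mul_monomial, mul_one]
    rw [hfac]
    exact Ideal.mul_mem_left _ _ (nf_connect k hr m)
  have hqk : aeval (edgeImage k d r) q = 0 := by
    have h1 : aeval (edgeImage k d r) (p - q) = 0 := Jid_le_ker k hr hpq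
    rw [map_sub, hp0, zero_sub, neg_eq_zero] at h1
    exact h1
  have hq0 : q = 0 := by
    apply MvPolynomial.ext
    intro n
    rw [coeff_zero]
    have hcoe : ∀ n' : EVar d r →₀ ℕ, coeff n' q
        = ∑ m ∈ p.support, (if nf m = n' then coeff m p else 0) := by
      intro n'
      rw [hq, coeff_sum]
      exact Finset.sum_congr rfl fun m _ => coeff_monomial _ _ _
    by_cases hex : ∃ m₀ ∈ p.support, nf m₀ = n
    · obtain ⟨m₀, hm₀, rfl⟩ := hex
      have haq : coeff (Phi d r (nf m₀)) (aeval (edgeImage k d r) q)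
          = ∑ m ∈ p.support, (if nf m = nf m₀ then coeff m p else 0) := by
        rw [hq, map_sum, coeff_sum]
        refine Finset.sum_congr rfl fun m _ => ?_
        rw [aeval_monomial_eq, coeff_monomial]
        refine if_congr ?_ rfl rfl
        constructor
        · intro hPhi
          refine nf_eq_of_Phi_eq hr m m₀ ?_
          rw [← Phi_nf hr m, ← Phi_nf hr m₀]
          exact hPhi
        · intro hnf
          rw [hnf]
      rw [hqk, coeff_zero] at haq
      rw [hcoe (nf m₀), ← haq]
    · push_neg at hex
      rw [hcoe n]
      exact Finset.sum_eq_zero fun m hm => if_neg (hex m hm)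
  have h2 : p = p - q := by rw [hq0, sub_zero]
  rw [h2]
  exact hpq

end Aux5


/-- For `r ≥ 3` and `d ≥ 2`, the toric ideal
`I_{G_{r,d}} ⊆ k[a_1,…,a_d,b_1,…,b_d,e_1,…,e_{2r-2}]` equals the ideal generated by
`{a_i b_j − b_i a_j : 1 ≤ i < j ≤ d} ∪ {a_i e_2 e_4 ⋯ e_{2r−2} − b_i e_1 e_3 ⋯ e_{2r−3} : 1 ≤ i ≤ d}`. -/
theorem toric_ideal_Grd_generators (k : Type) [Field k] (d r : ℕ) (hd : 2 ≤ d) (hr : 3 ≤ r) :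
    toricIdealGrd k d r =
      Ideal.span
        ({f | ∃ i j : Fin d, i < j ∧
            f = X (EVar.a i) * X (EVar.b j) - X (EVar.b i) * X (EVar.a j)} ∪
         {f | ∃ i : Fin d,
            f = X (EVar.a i) * evenEProd k d r - X (EVar.b i) * oddEProd k d r}) := by
  have h : toricIdealGrd k d r = Jid k d r :=
    le_antisymm (ker_le_Jid k hr) (Jid_le_ker k hr)
  exact h
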